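/- For (ρ,δ) ∈ I_{r,n} (an increasing colored permutation) and σ ∈ S_n, NNeg([(ρ,δ)σ]^{-1}) = NNeg((ρ,δ)^{-1}); moreover each increasing element (ρ,δ) ∈ I_{r,n} is uniquely determined by the multiset NNeg((ρ,δ)^{-1}). -/

import Mathlib

open scoped Classical

/-- The type-A descent set of a colored permutation `(π, c)` (colors `c i < r`),
for the order `j^{c_j} < k^{c_k}` iff `c_j > c_k`, or `c_j = c_k` and `j < k`. -/
def desAset (n : ℕ) (π : Equiv.Perm (Fin n)) (c : Fin n → ℕ) : Finset (Fin n) :=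
  Finset.univ.filter (fun i => ∃ h : (i : ℕ) + 1 < n,
    c i < c ⟨(i : ℕ) + 1, h⟩ ∨ (c i = c ⟨(i : ℕ) + 1, h⟩ ∧ π ⟨(i : ℕ) + 1, h⟩ < π i))

/-- The type-A descent number. -/
def desA (n : ℕ) (π : Equiv.Perm (Fin n)) (c : Fin n → ℕ) : ℕ := (desAset n π c).card

/-- Color of the letter `i` in the inverse of the colored permutation `(π, c)`. -/
def cinv (r n : ℕ) (π : Equiv.Perm (Fin n)) (c : Fin n → ℕ) (i : Fin n) : ℕ :=
  (r - c (π⁻¹ i)) % r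

/-- The multiset `NNeg((π,c)⁻¹)`: each `i` appears with multiplicity equal to the
color of `i` in `(π,c)⁻¹`. -/
def NNegInv (r n : ℕ) (π : Equiv.Perm (Fin n)) (c : Fin n → ℕ) : Multiset (Fin n) :=
  ∑ i : Fin n, Multiset.replicate (cinv r n π c i) i

lemma count_NNegInv (r n : ℕ) (π : Equiv.Perm (Fin n)) (c : Fin n → ℕ) (j : Fin n) :
    Multiset.count j (NNegInv r n π c) = cinv r n π c j := by
  unfold NNegInv
  rw [Multiset.count_sum']
  simp [Multiset.count_replicate]

lemma mod_inj_of_lt {r a b : ℕ} (ha : a < r) (hb : b < r)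
    (h : (r - a) % r = (r - b) % r) : a = b := by
  rcases Nat.eq_zero_or_pos a with rfl | ha0
  · rcases Nat.eq_zero_or_pos b with rfl | hb0
    · rfl
    · rw [Nat.sub_zero, Nat.mod_self, Nat.mod_eq_of_lt (by omega)] at h
      omega
  · rcases Nat.eq_zero_or_pos b with rfl | hb0
    · rw [Nat.sub_zero, Nat.mod_self, Nat.mod_eq_of_lt (by omega)] at h
      omega
    · rw [Nat.mod_eq_of_lt (by omega), Nat.mod_eq_of_lt (by omega)] at h
      omega

lemma desA_zero_nodesc {n : ℕ} {ρ : Equiv.Perm (Fin n)} {δ : Fin n → ℕ}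
    (h : desA n ρ δ = 0) (i : Fin n) (hi : (i : ℕ) + 1 < n) :
    δ ⟨(i : ℕ) + 1, hi⟩ < δ i ∨ (δ i = δ ⟨(i : ℕ) + 1, hi⟩ ∧ ρ i < ρ ⟨(i : ℕ) + 1, hi⟩) := by
  have h' : desAset n ρ δ = ∅ := Finset.card_eq_zero.mp h
  have hmem := Finset.filter_eq_empty_iff.mp h' (Finset.mem_univ i)
  push_neg at hmem
  obtain ⟨h1, h2⟩ := hmem hi
  have hne : ρ i ≠ ρ ⟨(i : ℕ) + 1, hi⟩ := by
    intro hc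
    have := ρ.injective hc
    have : (i : ℕ) = (i : ℕ) + 1 := congrArg Fin.val this
    omega
  rcases lt_or_eq_of_le h1 with h3 | h3
  · exact Or.inl h3
  · exact Or.inr ⟨h3.symm, lt_of_le_of_ne (h2 h3.symm) hne⟩

/-- The key strict monotonicity: `desA = 0` means `i ↦ (r - δ i, ρ i)` is lex-increasing. -/
lemma desA_zero_strictMono {r n : ℕ} {ρ : Equiv.Perm (Fin n)} {δ : Fin n → ℕ}
    (hδ : ∀ i, δ i < r) (h : desA n ρ δ = 0) :
    StrictMono (fun i : Fin n => toLex ((r - δ i, ρ i) : ℕ × Fin n)) := by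
  cases n with
  | zero => intro a; exact a.elim0
  | succ m =>
    rw [Fin.strictMono_iff_lt_succ]
    intro i
    have hi : ((i.castSucc : Fin (m+1)) : ℕ) + 1 < m + 1 := by
      simp
    have hsucc : (⟨((i.castSucc : Fin (m+1)) : ℕ) + 1, hi⟩ : Fin (m+1)) = i.succ := by
      ext; simp
    rcases desA_zero_nodesc h i.castSucc hi with h1 | ⟨h1, h2⟩
    · rw [hsucc] at h1
      refine Prod.Lex.toLex_lt_toLex.mpr (Or.inl ?_)
      have := hδ i.castSucc
      have := hδ i.succ
      simp only []
      omega
    · rw [hsucc] at h1 h2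
      exact Prod.Lex.toLex_lt_toLex.mpr (Or.inr ⟨by rw [h1], h2⟩)

theorem stmt4 (r n : ℕ) (hr : 1 ≤ r) :
    (∀ (ρ : Equiv.Perm (Fin n)) (δ : Fin n → ℕ), (∀ i, δ i < r) → desA n ρ δ = 0 →
      ∀ σ : Equiv.Perm (Fin n),
        NNegInv r n (ρ * σ) (fun i => δ (σ i)) = NNegInv r n ρ δ) ∧
    (∀ (ρ ρ' : Equiv.Perm (Fin n)) (δ δ' : Fin n → ℕ),
      (∀ i, δ i < r) → (∀ i, δ' i < r) → desA n ρ δ = 0 → desA n ρ' δ' = 0 →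
      NNegInv r n ρ δ = NNegInv r n ρ' δ' → ρ = ρ' ∧ δ = δ') := by
  constructor
  · intro ρ δ hδ hdes σ
    unfold NNegInv
    refine Finset.sum_congr rfl fun i _ => ?_
    congr 1
    unfold cinv
    simp [mul_inv_rev, Equiv.Perm.mul_apply]
  · intro ρ ρ' δ δ' hδ hδ' hd hd' hN
    -- the colors of values agree
    have hf : ∀ v : Fin n, δ (ρ⁻¹ v) = δ' (ρ'⁻¹ v) := by
      intro v
      have := congrArg (Multiset.count v) hN
      rw [count_NNegInv, count_NNegInv] at this
      exact mod_inj_of_lt (hδ _) (hδ' _) this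
    set G : Fin n → Lex (ℕ × Fin n) := fun v => toLex (r - δ (ρ⁻¹ v), v) with hG
    have hg : (fun i : Fin n => toLex ((r - δ i, ρ i) : ℕ × Fin n)) = G ∘ ρ := by
      funext i; simp [hG]
    have hg' : (fun i : Fin n => toLex ((r - δ' i, ρ' i) : ℕ × Fin n)) = G ∘ ρ' := by
      funext i
      have h := hf (ρ' i)
      simp only [Equiv.Perm.inv_def, Equiv.symm_apply_apply] at h
      simp [hG, ← h]
    have hm : StrictMono (G ∘ ρ) := hg ▸ desA_zero_strictMono hδ hd
    have hm' : StrictMono (G ∘ ρ') := hg' ▸ desA_zero_strictMono hδ' hd'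
    have hrange : Set.range (G ∘ ρ) = Set.range (G ∘ ρ') := by
      rw [Set.range_comp, Set.range_comp, Equiv.range_eq_univ, Equiv.range_eq_univ]
    haveI : WellFoundedLT (Fin n) := inferInstance
    have heq : G ∘ ρ = G ∘ ρ' := (hm.range_inj hm').mp hrange
    have hGinj : Function.Injective G := by
      intro a b hab
      have := congrArg (fun x => (ofLex x).2) hab
      simpa [hG] using this
    have hρ : ρ = ρ' := by
      ext i
      have : G (ρ i) = G (ρ' i) := congrFun heq i
      exact congrArg Fin.val (hGinj this)
    subst hρ
    refine ⟨rfl, ?_⟩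
    funext i
    have := hf (ρ i)
    simpa using this
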